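/- If G is a connected graph of size m (number of edges), then σ₁(G) ≥ m, with equality if and only if every edge uv of G satisfies N[u] ∪ N[v] = V(G). -/
import Mathlib

set_option linter.unusedSectionVars false

/-- Number of k-nearly independent vertex subsets: subsets whose induced subgraph has exactly k edges. -/
def sigmaK {V : Type*} [Fintype V] [DecidableEq V] (G : SimpleGraph V) [DecidableRel G.Adj] (k : ℕ) : ℕ :=
  (Finset.univ.filter fun s : Finset V =>
    (s.sym2.filter fun e => e ∈ G.edgeSet).card = k).card

/-- A graph is good if for every edge uv, N[u] ∪ N[v] = V(G). -/
def IsGoodGraph {V : Type*} (G : SimpleGraph V) : Prop :=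
  ∀ u v : V, G.Adj u v →
    (insert u (G.neighborSet u)) ∪ (insert v (G.neighborSet v)) = Set.univ

section aux
variable {V : Type*} [DecidableEq V]

/-- endpoints of a sym2 as a finset -/
def pairFinset (e : Sym2 V) : Finset V :=
  Sym2.lift ⟨fun a b => {a, b}, fun a b => Finset.pair_comm a b⟩ e

@[simp] lemma pairFinset_mk (a b : V) : pairFinset s(a, b) = {a, b} := rfl

variable [Fintype V] (G : SimpleGraph V) [DecidableRel G.Adj]

lemma edgeIn_pair {u v : V} (h : G.Adj u v) :
    (({u, v} : Finset V).sym2.filter fun e => e ∈ G.edgeSet) = {s(u, v)} := by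
  ext e
  induction e using Sym2.ind with
  | _ a b =>
    simp only [Finset.mem_filter, Finset.mk_mem_sym2_iff, Finset.mem_insert,
      Finset.mem_singleton, SimpleGraph.mem_edgeSet, Sym2.eq_iff]
    constructor
    · rintro ⟨⟨ha | ha, hb | hb⟩, hadj⟩ <;> subst ha <;> subst hb <;>
        simp_all [h.ne, h.ne']
    · rintro (⟨rfl, rfl⟩ | ⟨rfl, rfl⟩) <;> simp [h, h.symm]

lemma edgeIn_triple {u v w : V} (h : G.Adj u v) (hwu : w ≠ u) (hwv : w ≠ v)
    (hau : ¬ G.Adj u w) (hav : ¬ G.Adj v w) :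
    (({u, v, w} : Finset V).sym2.filter fun e => e ∈ G.edgeSet) = {s(u, v)} := by
  ext e
  induction e using Sym2.ind with
  | _ a b =>
    simp only [Finset.mem_filter, Finset.mk_mem_sym2_iff, Finset.mem_insert,
      Finset.mem_singleton, SimpleGraph.mem_edgeSet, Sym2.eq_iff]
    constructor
    · rintro ⟨⟨ha | ha | ha, hb | hb | hb⟩, hadj⟩ <;> subst ha <;> subst hb <;>
        first
          | (exfalso; exact G.irrefl hadj)
          | (exfalso; exact hau hadj)
          | (exfalso; exact hav hadj)
          | (exfalso; exact hau hadj.symm)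
          | (exfalso; exact hav hadj.symm)
          | tauto
    · rintro (⟨rfl, rfl⟩ | ⟨rfl, rfl⟩) <;> exact ⟨by tauto, by simp [h, h.symm]⟩

end aux

theorem stmt1 {V : Type*} [Fintype V] [DecidableEq V] (G : SimpleGraph V) [DecidableRel G.Adj]
    (hconn : G.Connected) :
    G.edgeFinset.card ≤ sigmaK G 1 ∧
      (sigmaK G 1 = G.edgeFinset.card ↔ IsGoodGraph G) := by
  classical
  set F := Finset.univ.filter fun s : Finset V =>
    (s.sym2.filter fun e => e ∈ G.edgeSet).card = 1 with hF
  have hsig : sigmaK G 1 = F.card := rfl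
  have hmaps : ∀ e ∈ G.edgeFinset, pairFinset e ∈ F := by
    intro e he
    induction e using Sym2.ind with
    | _ u v =>
      rw [SimpleGraph.mem_edgeFinset, SimpleGraph.mem_edgeSet] at he
      simp only [hF, Finset.mem_filter, Finset.mem_univ, true_and, pairFinset_mk]
      rw [edgeIn_pair G he]; simp
  have hinj : Set.InjOn pairFinset (G.edgeFinset : Set (Sym2 V)) := by
    intro e he e' he' h
    induction e using Sym2.ind with
    | _ a b =>
      induction e' using Sym2.ind with
      | _ c d =>
        have := Finset.ext_iff.mp h
        simp only [pairFinset_mk, Finset.mem_insert, Finset.mem_singleton] at this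
        rw [Sym2.eq_iff]
        have h1 := (this a).mp (Or.inl rfl)
        have h2 := (this b).mp (Or.inr rfl)
        have h3 := (this c).mpr (Or.inl rfl)
        have h4 := (this d).mpr (Or.inr rfl)
        tauto
  have himage : G.edgeFinset.image pairFinset ⊆ F := by
    intro s hs
    obtain ⟨e, he, rfl⟩ := Finset.mem_image.mp hs
    exact hmaps e he
  have himcard : (G.edgeFinset.image pairFinset).card = G.edgeFinset.card :=
    Finset.card_image_of_injOn hinj
  have hcard_le : G.edgeFinset.card ≤ F.card := by
    rw [← himcard]; exact Finset.card_le_card himage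
  refine ⟨by rw [hsig]; exact hcard_le, ?_, ?_⟩
  · -- equality → good
    intro heq u v huv
    by_contra hng
    rw [Set.eq_univ_iff_forall] at hng
    push_neg at hng
    obtain ⟨w, hw⟩ := hng
    simp only [Set.mem_union, Set.mem_insert_iff, SimpleGraph.mem_neighborSet, not_or] at hw
    obtain ⟨⟨hwu, hau⟩, hwv, hav⟩ := hw
    have hsF : ({u, v, w} : Finset V) ∈ F := by
      simp only [hF, Finset.mem_filter, Finset.mem_univ, true_and]
      rw [edgeIn_triple G huv hwu hwv hau hav]; simp
    have hsnot : ({u, v, w} : Finset V) ∉ G.edgeFinset.image pairFinset := by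
      intro hmem
      obtain ⟨e, he, hpe⟩ := Finset.mem_image.mp hmem
      induction e using Sym2.ind with
      | _ a b =>
        rw [SimpleGraph.mem_edgeFinset, SimpleGraph.mem_edgeSet] at he
        have hc2 : ({a, b} : Finset V).card = 2 := Finset.card_pair he.ne
        have hc3 : ({u, v, w} : Finset V).card = 3 := by
          rw [Finset.card_insert_of_notMem (by simp [huv.ne, Ne.symm hwu]),
              Finset.card_insert_of_notMem (by simp [Ne.symm hwv])]
          simp
        rw [pairFinset_mk] at hpe
        rw [hpe] at hc2
        omega
    have hss : G.edgeFinset.image pairFinset ⊂ F :=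
      ⟨himage, fun hsub => hsnot (hsub hsF)⟩
    have := Finset.card_lt_card hss
    rw [himcard] at this
    omega
  · -- good → equality
    intro hgood
    have hFsub : F ⊆ G.edgeFinset.image pairFinset := by
      intro s hs
      simp only [hF, Finset.mem_filter, Finset.mem_univ, true_and] at hs
      obtain ⟨e, hee⟩ := Finset.card_eq_one.mp hs
      have heF : e ∈ (s.sym2.filter fun e => e ∈ G.edgeSet) := by rw [hee]; simp
      induction e using Sym2.ind with
      | _ u v =>
        rw [Finset.mem_filter, Finset.mk_mem_sym2_iff, SimpleGraph.mem_edgeSet] at heF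
        obtain ⟨⟨hus, hvs⟩, huv⟩ := heF
        have hseq : s = {u, v} := by
          apply Finset.Subset.antisymm
          · intro w hws
            have hwmem : w ∈ (insert u (G.neighborSet u)) ∪ (insert v (G.neighborSet v)) := by
              rw [hgood u v huv]; trivial
            simp only [Set.mem_union, Set.mem_insert_iff, SimpleGraph.mem_neighborSet] at hwmem
            simp only [Finset.mem_insert, Finset.mem_singleton]
            rcases hwmem with (rfl | hadj) | (rfl | hadj)
            · exact Or.inl rfl
            · -- Adj u w: edge s(u,w) in filter, so s(u,w) = s(u,v), hence w = v
              have : s(u, w) ∈ (s.sym2.filter fun e => e ∈ G.edgeSet) := by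
                rw [Finset.mem_filter, Finset.mk_mem_sym2_iff]
                exact ⟨⟨hus, hws⟩, hadj⟩
              rw [hee, Finset.mem_singleton, Sym2.eq_iff] at this
              rcases this with ⟨-, rfl⟩ | ⟨rfl, rfl⟩
              · exact Or.inr rfl
              · exact absurd rfl hadj.ne
            · exact Or.inr rfl
            · have : s(v, w) ∈ (s.sym2.filter fun e => e ∈ G.edgeSet) := by
                rw [Finset.mem_filter, Finset.mk_mem_sym2_iff]
                exact ⟨⟨hvs, hws⟩, hadj⟩
              rw [hee, Finset.mem_singleton, Sym2.eq_iff] at this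
              rcases this with ⟨hvu, -⟩ | ⟨-, hwu2⟩
              · exact absurd hvu huv.ne'
              · exact Or.inl hwu2
          · intro w hw
            simp only [Finset.mem_insert, Finset.mem_singleton] at hw
            rcases hw with rfl | rfl
            · exact hus
            · exact hvs
        rw [Finset.mem_image]
        exact ⟨s(u, v), by rw [SimpleGraph.mem_edgeFinset, SimpleGraph.mem_edgeSet]; exact huv,
          by rw [hseq, pairFinset_mk]⟩
    rw [hsig, ← himcard]
    exact congrArg Finset.card (Finset.Subset.antisymm hFsub himage)
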